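/- Let f : X → Y be a perfect irreducible continuous surjection and U ⊆ X open. Then f(cl U) = cl(U_♯), where U_♯ = {y ∈ Y : f⁻¹(y) ⊆ U} = Y \ f(X \ U); in particular, the image under f of a regularly closed subset of X is regularly closed in Y, and U_♯ is nonempty and open whenever U is nonempty. -/

import Mathlib

/-- A set is regularly closed if it equals the closure of its interior. -/
def RegClosed {X : Type*} [TopologicalSpace X] (C : Set X) : Prop :=
  C = closure (interior C)

theorem stmt14 {X Y : Type*} [TopologicalSpace X] [TopologicalSpace Y]
    (f : X → Y) (hcont : Continuous f) (hclosed : IsClosedMap f)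
    (hfib : ∀ y : Y, IsCompact (f ⁻¹' {y})) (hsurj : Function.Surjective f)
    (hirr : ∀ F : Set X, IsClosed F → f '' F = Set.univ → F = Set.univ) :
    ∀ U : Set X, IsOpen U →
      (f '' closure U = closure {y : Y | f ⁻¹' {y} ⊆ U}) ∧
      ({y : Y | f ⁻¹' {y} ⊆ U} = (f '' Uᶜ)ᶜ) ∧
      (∀ C : Set X, RegClosed C → RegClosed (f '' C)) ∧
      (U.Nonempty → IsOpen {y : Y | f ⁻¹' {y} ⊆ U} ∧ {y : Y | f ⁻¹' {y} ⊆ U}.Nonempty) := by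
  -- sharp V = {y | f⁻¹ y ⊆ V}
  have hcompl : ∀ V : Set X, {y : Y | f ⁻¹' {y} ⊆ V} = (f '' Vᶜ)ᶜ := by
    intro V
    ext y
    constructor
    · intro h hy
      obtain ⟨x, hxc, hfx⟩ := hy
      exact hxc (h hfx)
    · intro h x hx
      by_contra hxV
      exact h ⟨x, hxV, hx⟩
  -- nonempty sharp for nonempty open
  have hne : ∀ V : Set X, IsOpen V → V.Nonempty → {y : Y | f ⁻¹' {y} ⊆ V}.Nonempty := by
    intro V hV hVne
    by_contra h
    rw [Set.not_nonempty_iff_eq_empty, hcompl, Set.compl_empty_iff] at h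
    have := hirr Vᶜ hV.isClosed_compl h
    exact hVne.ne_empty (by simpa using congrArg compl this)
  -- sharp ⊆ f '' V
  have hsub : ∀ V : Set X, {y : Y | f ⁻¹' {y} ⊆ V} ⊆ f '' V := by
    intro V y hy
    obtain ⟨x, rfl⟩ := hsurj y
    exact ⟨x, hy rfl, rfl⟩
  -- sharp is open
  have hopen : ∀ V : Set X, IsOpen V → IsOpen {y : Y | f ⁻¹' {y} ⊆ V} := by
    intro V hV
    rw [hcompl]
    exact (hclosed _ hV.isClosed_compl).isOpen_compl
  -- main equality
  have hmain : ∀ V : Set X, IsOpen V → f '' closure V = closure {y : Y | f ⁻¹' {y} ⊆ V} := by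
    intro V hV
    apply Set.Subset.antisymm
    · rintro y ⟨x, hx, rfl⟩
      rw [mem_closure_iff]
      intro W hW hfxW
      have hVW : (V ∩ f ⁻¹' W).Nonempty := by
        obtain ⟨z, hz1, hz2⟩ := mem_closure_iff.1 hx (f ⁻¹' W) (hW.preimage hcont) hfxW
        exact ⟨z, hz2, hz1⟩
      obtain ⟨y', hy'⟩ := hne (V ∩ f ⁻¹' W) (hV.inter (hW.preimage hcont)) hVW
      obtain ⟨x', rfl⟩ := hsurj y'
      refine ⟨f x', ?_, fun z hz => (hy' hz).1⟩
      exact (hy' rfl).2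
    · exact closure_minimal ((hsub V).trans (Set.image_mono (f := f) subset_closure))
        (hclosed _ isClosed_closure)
  intro U hU
  refine ⟨hmain U hU, hcompl U, ?_, fun hUne => ⟨hopen U hU, hne U hU hUne⟩⟩
  intro C hC
  have h1 : f '' C = closure {y : Y | f ⁻¹' {y} ⊆ interior C} := by
    conv_lhs => rw [hC]
    exact hmain _ isOpen_interior
  have h2 : {y : Y | f ⁻¹' {y} ⊆ interior C} ⊆ interior (f '' C) := by
    apply (hopen _ isOpen_interior).subset_interior_iff.2
    exact (hsub _).trans (Set.image_mono (f := f) interior_subset)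
  apply Set.Subset.antisymm
  · calc f '' C = closure {y : Y | f ⁻¹' {y} ⊆ interior C} := h1
      _ ⊆ closure (interior (f '' C)) := closure_mono h2
  · calc closure (interior (f '' C)) ⊆ closure (f '' C) := closure_mono interior_subset
      _ = f '' C := by rw [h1, closure_closure, ← h1]
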